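/- Let X₁,…,X₆ be independent with Xᵢ ~ Uniform[−1,1], and f(X) = (a₁X₁ + a₂X₂)·1{X₆ ≤ 0} + (a₃X₃ + a₄X₄)·1{X₆ > 0}. For an observation x with x₆ ≤ 0 and for i ∈ {3,4}, the Local Shapley Value φ_{x_i} (with value function v(S) = E[f(X) | X_S = x_S]) equals K·aᵢ·(xᵢ − E[Xᵢ]) = K·aᵢ·xᵢ for a constant K proportional to P(X₆ > 0); in particular φ_{x_i} ≠ 0 whenever aᵢxᵢ ≠ 0, even though feature i does not influence the prediction at x. -/

import Mathlib

open Finset MeasureTheory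

/-- The uniform probability measure on `[-1, 1]`. -/
noncomputable def unif : Measure ℝ :=
  (2⁻¹ : ENNReal) • MeasureTheory.volume.restrict (Set.Icc (-1) 1)

/-- The joint law of six i.i.d. `Uniform[-1,1]` features. -/
noncomputable def law6 : Measure (Fin 6 → ℝ) := Measure.pi fun _ => unif

/-- The piecewise linear model
`f(X) = (a₁X₁ + a₂X₂)·1{X₆ ≤ 0} + (a₃X₃ + a₄X₄)·1{X₆ > 0}` (0-indexed). -/
noncomputable def fSwitch (a : Fin 6 → ℝ) (z : Fin 6 → ℝ) : ℝ :=
  (a 0 * z 0 + a 1 * z 1) * (if z 5 ≤ 0 then 1 else 0)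
    + (a 2 * z 2 + a 3 * z 3) * (if 0 < z 5 then 1 else 0)

/-- Shapley value of player `l` for the game `v` on `p` players, with standard weights. -/
noncomputable def shapleyValue (p : ℕ) (v : Finset (Fin p) → ℝ) (l : Fin p) : ℝ :=
  ∑ S ∈ (Finset.univ.erase l).powerset,
    (1 / (p : ℝ)) * ((Nat.choose (p - 1) S.card : ℝ))⁻¹ * (v (insert l S) - v S)

/-- The Local Shapley Value of feature `i` at `x`, with value function
`v(S) = E[f(X) | X_S = x_S]` (conditioning = marginalization by independence). -/
noncomputable def lsv (a x : Fin 6 → ℝ) (i : Fin 6) : ℝ :=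
  shapleyValue 6
    (fun S => ∫ y, fSwitch a (fun j => if j ∈ S then x j else y j) ∂law6) i

/-- For an observation `x` with `x₆ ≤ 0`, the Local Shapley Values of the locally unused
features `X₃, X₄` (indices 2, 3) equal `K · aᵢ · (xᵢ − E[Xᵢ]) = K · aᵢ · xᵢ` for a constant
`K > 0` proportional to `P(X₆ > 0)`; in particular they are nonzero whenever `aᵢxᵢ ≠ 0`. -/

instance : IsProbabilityMeasure unif := by
  constructor
  simp [unif, Measure.restrict_apply_univ, Real.volume_Icc]
  rw [show ((1:ℝ) + 1) = 2 by norm_num, show ENNReal.ofReal 2 = 2 by simp [ENNReal.ofReal_ofNat]]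
  simp [ENNReal.inv_mul_cancel]

def Runif : Type := ℝ
instance : MeasurableSpace Runif := inferInstanceAs (MeasurableSpace ℝ)
noncomputable instance : MeasureSpace Runif := { toMeasurableSpace := inferInstance, volume := unif }
instance : SigmaFinite (volume : Measure Runif) := inferInstanceAs (SigmaFinite unif)

lemma integral_pi6 (f : Fin 6 → ℝ → ℝ) :
    ∫ y, (∏ j, f j (y j)) ∂law6 = ∏ j, ∫ t, f j t ∂unif :=
  MeasureTheory.integral_fin_nat_prod_eq_prod (μ := fun _ : Fin 6 => unif) f

lemma integrable_pi6 {f : Fin 6 → ℝ → ℝ} (hf : ∀ j, Integrable (f j) unif) :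
    Integrable (fun y => ∏ j, f j (y j)) law6 :=
  MeasureTheory.Integrable.fin_nat_prod (μ := fun _ : Fin 6 => unif) hf

lemma unif_apply {s : Set ℝ} (hs : MeasurableSet s) :
    unif s = 2⁻¹ * volume (s ∩ Set.Icc (-1) 1) := by
  simp [unif, Measure.restrict_apply hs]

lemma int_id : ∫ t, t ∂unif = 0 := by
  rw [unif, integral_smul_measure]
  have h1 : ∫ t in Set.Icc (-1:ℝ) 1, t = ∫ t in (-1:ℝ)..1, t := by
    rw [intervalIntegral.integral_of_le (by norm_num), integral_Icc_eq_integral_Ioc]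
  rw [h1, integral_id]
  norm_num

lemma int_gle : ∫ t, (if t ≤ 0 then (1:ℝ) else 0) ∂unif = 1/2 := by
  have h : (fun t : ℝ => if t ≤ 0 then (1:ℝ) else 0)
      = Set.indicator (Set.Iic 0) (fun _ => 1) := by
    ext t; simp [Set.indicator_apply]
  rw [h, integral_indicator measurableSet_Iic, setIntegral_const, smul_eq_mul, mul_one]
  have : Set.Iic (0:ℝ) ∩ Set.Icc (-1) 1 = Set.Icc (-1) 0 := by
    ext t
    simp only [Set.mem_inter_iff, Set.mem_Iic, Set.mem_Icc]
    constructor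
    · rintro ⟨h1, h2, h3⟩; exact ⟨h2, h1⟩
    · rintro ⟨h1, h2⟩; exact ⟨h2, h1, by linarith⟩
  rw [measureReal_def, unif_apply measurableSet_Iic, this, Real.volume_Icc]
  norm_num

lemma unif_Ioi : unif (Set.Ioi 0) = 2⁻¹ := by
  have : Set.Ioi (0:ℝ) ∩ Set.Icc (-1) 1 = Set.Ioc 0 1 := by
    ext t
    simp only [Set.mem_inter_iff, Set.mem_Ioi, Set.mem_Icc, Set.mem_Ioc]
    constructor
    · rintro ⟨h1, h2, h3⟩; exact ⟨h1, h3⟩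
    · rintro ⟨h1, h2⟩; exact ⟨h1, by linarith, h2⟩
  rw [unif_apply measurableSet_Ioi, this, Real.volume_Ioc]
  norm_num

lemma int_ggt : ∫ t, (if 0 < t then (1:ℝ) else 0) ∂unif = 1/2 := by
  have h : (fun t : ℝ => if 0 < t then (1:ℝ) else 0)
      = Set.indicator (Set.Ioi 0) (fun _ => 1) := by
    ext t; simp [Set.indicator_apply]
  rw [h, integral_indicator measurableSet_Ioi, setIntegral_const, smul_eq_mul, mul_one,
    measureReal_def, unif_Ioi]
  norm_num

lemma integrable_id_unif : Integrable (fun t : ℝ => t) unif := by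
  rw [unif]
  refine Integrable.smul_measure ?_ (by norm_num)
  exact (continuous_id.integrableOn_Icc)

lemma integrable_gle : Integrable (fun t : ℝ => if t ≤ 0 then (1:ℝ) else 0) unif := by
  have h : (fun t : ℝ => if t ≤ 0 then (1:ℝ) else 0)
      = Set.indicator (Set.Iic 0) (fun _ => 1) := by
    ext t; simp [Set.indicator_apply]
  rw [h]
  exact (integrable_const 1).indicator measurableSet_Iic

lemma integrable_ggt : Integrable (fun t : ℝ => if 0 < t then (1:ℝ) else 0) unif := by
  have h : (fun t : ℝ => if 0 < t then (1:ℝ) else 0)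
      = Set.indicator (Set.Ioi 0) (fun _ => 1) := by
    ext t; simp [Set.indicator_apply]
  rw [h]
  exact (integrable_const 1).indicator measurableSet_Ioi

set_option maxHeartbeats 1000000 in
lemma vS_eq (a x : Fin 6 → ℝ) (hx : x 5 ≤ 0) (S : Finset (Fin 6)) :
    (∫ y, fSwitch a (fun j => if j ∈ S then x j else y j) ∂law6)
      = (a 0 * (if (0:Fin 6) ∈ S then x 0 else 0) + a 1 * (if (1:Fin 6) ∈ S then x 1 else 0))
          * (if (5:Fin 6) ∈ S then 1 else 1/2)
        + (a 2 * (if (2:Fin 6) ∈ S then x 2 else 0) + a 3 * (if (3:Fin 6) ∈ S then x 3 else 0))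
          * (if (5:Fin 6) ∈ S then 0 else 1/2) := by
  classical
  set gle : ℝ → ℝ := fun t => if t ≤ 0 then (1:ℝ) else 0 with hgle
  set ggt : ℝ → ℝ := fun t => if 0 < t then (1:ℝ) else 0 with hggt
  set F : Fin 6 → (ℝ → ℝ) → Fin 6 → ℝ → ℝ := fun k g j t =>
    if j = k then a k * (if k ∈ S then x k else t)
    else if j = 5 then g (if (5:Fin 6) ∈ S then x 5 else t) else 1 with hF
  have step1 : ∀ y : Fin 6 → ℝ, fSwitch a (fun j => if j ∈ S then x j else y j)
      = (∏ j, F 0 gle j (y j)) + ((∏ j, F 1 gle j (y j))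
        + ((∏ j, F 2 ggt j (y j)) + ∏ j, F 3 ggt j (y j))) := by
    intro y
    simp only [hF, fSwitch, Fin.prod_univ_six, hgle, hggt, Fin.reduceEq, reduceIte]
    ring
  -- integrability of each factor family
  have hint : ∀ (k : Fin 6) (g : ℝ → ℝ), Integrable g unif → k ≠ 5 →
      ∀ j, Integrable (F k g j) unif := by
    intro k g hg hk5 j
    simp only [hF]
    split_ifs with h1 h2 h3
    · exact integrable_const _
    · exact integrable_id_unif.const_mul _
    · exact integrable_const _
    · exact hg
    · exact integrable_const _
  have key := step1
  calc ∫ y, fSwitch a (fun j => if j ∈ S then x j else y j) ∂law6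
      = ∫ y, ((∏ j, F 0 gle j (y j)) + ((∏ j, F 1 gle j (y j))
        + ((∏ j, F 2 ggt j (y j)) + ∏ j, F 3 ggt j (y j)))) ∂law6 := by
        exact integral_congr_ae (Filter.Eventually.of_forall step1)
    _ = (∏ j, ∫ t, F 0 gle j t ∂unif) + ((∏ j, ∫ t, F 1 gle j t ∂unif)
        + ((∏ j, ∫ t, F 2 ggt j t ∂unif) + (∏ j, ∫ t, F 3 ggt j t ∂unif))) := by
        have I0 : Integrable (fun y => ∏ j, F 0 gle j (y j)) law6 :=
          integrable_pi6 (hint 0 gle integrable_gle (by decide))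
        have I1 : Integrable (fun y => ∏ j, F 1 gle j (y j)) law6 :=
          integrable_pi6 (hint 1 gle integrable_gle (by decide))
        have I2 : Integrable (fun y => ∏ j, F 2 ggt j (y j)) law6 :=
          integrable_pi6 (hint 2 ggt integrable_ggt (by decide))
        have I3 : Integrable (fun y => ∏ j, F 3 ggt j (y j)) law6 :=
          integrable_pi6 (hint 3 ggt integrable_ggt (by decide))
        have I23 : Integrable (fun y => (∏ j, F 2 ggt j (y j)) + ∏ j, F 3 ggt j (y j)) law6 :=
          I2.add I3
        have I123 : Integrable (fun y => (∏ j, F 1 gle j (y j))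
            + ((∏ j, F 2 ggt j (y j)) + ∏ j, F 3 ggt j (y j))) law6 := I1.add I23
        rw [integral_add I0 I123, integral_add I1 I23, integral_add I2 I3,
          integral_pi6, integral_pi6, integral_pi6, integral_pi6]
    _ = _ := by
        have hlin : ∀ (c : ℝ) (b : Prop) [Decidable b] (d : ℝ),
            ∫ t, (c * (if b then d else t)) ∂unif = c * (if b then d else 0) := by
          intro c b _ d
          by_cases h : b
          · simp [h]
          · simp only [h, if_false]
            rw [integral_const_mul, int_id]
        have hcon : ∀ c : ℝ, ∫ _ : ℝ, c ∂unif = c := by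
          intro c; simp
        have h5 : ∫ t, gle (if (5:Fin 6) ∈ S then x 5 else t) ∂unif
            = (if (5:Fin 6) ∈ S then 1 else 1/2) := by
          by_cases h : (5:Fin 6) ∈ S
          · simp only [h, if_true, hgle, hx, hcon]
          · simp only [h, if_false]; exact int_gle
        have h5' : ∫ t, ggt (if (5:Fin 6) ∈ S then x 5 else t) ∂unif
            = (if (5:Fin 6) ∈ S then 0 else 1/2) := by
          by_cases h : (5:Fin 6) ∈ S
          · simp only [h, if_true, hggt, not_lt.2 hx, hcon, if_false]
          · simp only [h, if_false]; exact int_ggt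
        simp only [hF, Fin.prod_univ_six, Fin.reduceEq, reduceIte]
        rw [hlin, hlin, hlin, hlin, hcon, h5, h5']
        ring

lemma lsv_eq (a x : Fin 6 → ℝ) (hx : x 5 ≤ 0) (i : Fin 6) (hi : i ∈ ({2,3} : Finset (Fin 6))) :
    lsv a x i = (1/4) * (a i * x i) := by
  classical
  have hi' : i = 2 ∨ i = 3 := by
    simpa [Finset.mem_insert, Finset.mem_singleton] using hi
  have key : ∀ U : Finset (Fin 6), Finset.univ.erase i = insert 5 U → (5:Fin 6) ∉ U →
      U.card = 4 →
      (∀ S : Finset (Fin 6), S ∈ (Finset.univ.erase i).powerset →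
        ((∫ y, fSwitch a (fun j => if j ∈ insert i S then x j else y j) ∂law6)
          - ∫ y, fSwitch a (fun j => if j ∈ S then x j else y j) ∂law6)
          = a i * x i * (if (5:Fin 6) ∈ S then 0 else 1/2)) →
      lsv a x i = (1/4) * (a i * x i) := by
    intro U hU h5U hcard hdiff
    rw [lsv, shapleyValue]
    rw [Finset.sum_congr rfl (fun S hS => by rw [hdiff S hS])]
    rw [hU, Finset.sum_powerset_insert h5U]
    simp only [Nat.cast_ofNat]
    have hz : ∑ S ∈ U.powerset,
        (1 / (6:ℝ)) * ((Nat.choose (6-1) (insert (5:Fin 6) S).card : ℝ))⁻¹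
          * (a i * x i * (if (5:Fin 6) ∈ insert (5:Fin 6) S then 0 else 1/2)) = 0 := by
      refine Finset.sum_eq_zero fun S _ => by simp
    rw [hz, add_zero]
    have hc : ∀ S ∈ U.powerset,
        (1 / (6:ℝ)) * ((Nat.choose (6-1) S.card : ℝ))⁻¹
          * (a i * x i * (if (5:Fin 6) ∈ S then 0 else 1/2))
        = (fun n => (1 / (6:ℝ)) * ((Nat.choose 5 n : ℝ))⁻¹ * (a i * x i * (1/2))) S.card := by
      intro S hS
      have : (5:Fin 6) ∉ S := fun h => h5U (Finset.mem_powerset.1 hS h)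
      simp [this]
    rw [Finset.sum_congr rfl hc]
    beta_reduce
    rw [Finset.sum_powerset_apply_card (f := fun n => (1 / (6:ℝ)) * ((Nat.choose 5 n : ℝ))⁻¹ * (a i * x i * (1/2))), hcard]
    simp [Finset.sum_range_succ, Nat.choose]
    ring
  rcases hi' with rfl | rfl
  · refine key {0,1,3,4} (by decide) (by decide) (by decide) ?_
    intro S hS
    have h2 : (2:Fin 6) ∉ S := fun h =>
      (by decide : (2:Fin 6) ∉ Finset.univ.erase (2:Fin 6)) (Finset.mem_powerset.1 hS h)
    rw [vS_eq a x hx, vS_eq a x hx]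
    simp only [Finset.mem_insert, Fin.reduceEq, false_or, true_or, if_true, h2, if_false]
    ring
  · refine key {0,1,2,4} (by decide) (by decide) (by decide) ?_
    intro S hS
    have h3 : (3:Fin 6) ∉ S := fun h =>
      (by decide : (3:Fin 6) ∉ Finset.univ.erase (3:Fin 6)) (Finset.mem_powerset.1 hS h)
    rw [vS_eq a x hx, vS_eq a x hx]
    simp only [Finset.mem_insert, Fin.reduceEq, false_or, true_or, if_true, h3, if_false]
    ring

theorem lsv_not_local (a x : Fin 6 → ℝ) (hx : x 5 ≤ 0) :
    ∃ K : ℝ, 0 < K ∧ (∃ c : ℝ, 0 < c ∧ K = c * (unif (Set.Ioi 0)).toReal) ∧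
      ∀ i ∈ ({2, 3} : Finset (Fin 6)),
        (lsv a x i = K * (a i * (x i - ∫ t, t ∂unif)) ∧ lsv a x i = K * (a i * x i) ∧
          (a i * x i ≠ 0 → lsv a x i ≠ 0)) := by
  refine ⟨1/4, by norm_num, ⟨1/2, by norm_num, ?_⟩, ?_⟩
  · rw [unif_Ioi]; norm_num
  · intro i hi
    have h := lsv_eq a x hx i hi
    refine ⟨by rw [h, int_id]; ring, h, fun hne => by rw [h]; positivity⟩
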